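/- Suppose (b_1,…,b_n) ∈ ℕ^n lies in Ω, with b_1,…,b_s < t and b_{s+1},…,b_n ≥ t for some s ≥ 2 (after reordering), and set a_{s+1} = ts − (b_1 + ⋯ + b_s). Then 0 < a_{s+1} ≤ t, the vector (b_1,…,b_s, a_{s+1}, t,…,t) lies in Δ_{n,t}, and it is coordinatewise ≤ (b_1,…,b_n). -/

import Mathlib

open Finset

/-- The set `Δ_{n,t}`. -/
def Delta (n t : ℕ) : Set (Fin n → ℕ) :=
  {a | (∀ i, 1 ≤ a i ∧ a i ≤ t) ∧ ∑ i, a i = t * (n - 1)} ∪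
  {a | ∃ i : Fin n, a = fun j => if j = i then 0 else t}

/-- If `b ∈ ℕ^n` satisfies the key inequality `∑_{i∈S} b_i ≥ t(|S|−1)` for all
`S`, with `b_1,…,b_s < t` and `b_{s+1},…,b_n ≥ t` for some `s ≥ 2`, then with
`a_{s+1} = ts − (b_1 + ⋯ + b_s)` we have `0 < a_{s+1} ≤ t`, the vector
`(b_1,…,b_s,a_{s+1},t,…,t)` lies in `Δ_{n,t}`, and it is coordinatewise `≤ b`.
(Indices are `0`-based: the first `s` coordinates are those with `(i : ℕ) < s`.) -/
theorem stmt_5 (n t : ℕ) (hn : 3 ≤ n) (ht : 1 ≤ t) (b : Fin n → ℕ)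
    (s : ℕ) (hs2 : 2 ≤ s) (hsn : s < n)
    (hsmall : ∀ i : Fin n, (i : ℕ) < s → b i < t)
    (hbig : ∀ i : Fin n, s ≤ (i : ℕ) → t ≤ b i)
    (hkey : ∀ S : Finset (Fin n), t * (S.card - 1) ≤ ∑ i ∈ S, b i) :
    0 < t * s - ∑ j ∈ Finset.univ.filter (fun j : Fin n => (j : ℕ) < s), b j ∧
    t * s - ∑ j ∈ Finset.univ.filter (fun j : Fin n => (j : ℕ) < s), b j ≤ t ∧
    (fun i : Fin n => if (i : ℕ) < s then b i
        else if (i : ℕ) = s then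
          t * s - ∑ j ∈ Finset.univ.filter (fun j : Fin n => (j : ℕ) < s), b j
        else t) ∈ Delta n t ∧
    (∀ i : Fin n, (if (i : ℕ) < s then b i
        else if (i : ℕ) = s then
          t * s - ∑ j ∈ Finset.univ.filter (fun j : Fin n => (j : ℕ) < s), b j
        else t) ≤ b i) := by
  set S0 := Finset.univ.filter (fun j : Fin n => (j : ℕ) < s) with hS0
  set B := ∑ j ∈ S0, b j with hB
  have hcard : S0.card = s := by
    have he : S0 = Finset.attachFin (Finset.range s)
        (fun m hm => lt_of_lt_of_le (Finset.mem_range.mp hm) hsn.le) := by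
      ext j; simp [hS0, Finset.mem_attachFin]
    rw [he, Finset.card_attachFin, Finset.card_range]
  have hBlt : B < t * s := by
    have h1 : B ≤ S0.card * (t - 1) := by
      apply Finset.sum_le_card_nsmul
      intro j hj
      have := hsmall j (by simpa [hS0] using hj)
      omega
    rw [hcard] at h1
    have h2 : (t - 1) * s < t * s :=
      Nat.mul_lt_mul_of_lt_of_le (by omega : t - 1 < t) (le_refl s) (by omega)
    calc B ≤ s * (t - 1) := h1
      _ = (t - 1) * s := mul_comm _ _
      _ < t * s := h2
  have hBge : t * (s - 1) ≤ B := by have := hkey S0; rwa [hcard] at this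
  have hts : t * s = t * (s - 1) + t := by
    rw [← Nat.mul_succ]; congr 1; omega
  have h1b : ∀ i : Fin n, (i : ℕ) < s → 1 ≤ b i := by
    intro i hi
    by_contra h
    push_neg at h
    have hi0 : b i = 0 := by omega
    set i0 : Fin n := ⟨0, by omega⟩ with hi0d
    set i1 : Fin n := ⟨1, by omega⟩ with hi1d
    have h01 : i0 ≠ i1 := by simp [hi0d, hi1d, Fin.ext_iff]
    set j := if i = i0 then i1 else i0 with hjd
    have hji : i ≠ j := by
      by_cases hc : i = i0
      · simp only [hjd, if_pos hc, hc]; exact h01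
      · simp only [hjd, if_neg hc]; exact hc
    have hjs : (j : ℕ) < s := by
      by_cases hc : i = i0
      · rw [hjd, if_pos hc, hi1d]; show 1 < s; omega
      · rw [hjd, if_neg hc, hi0d]; show 0 < s; omega
    have hk := hkey {i, j}
    rw [Finset.card_pair hji, Finset.sum_pair hji] at hk
    have := hsmall j hjs
    omega
  have hsum : ∑ i : Fin n,
      (if (i : ℕ) < s then b i else if (i : ℕ) = s then t * s - B else t)
      = t * (n - 1) := by
    obtain ⟨m, hm⟩ : ∃ m, n = s + 1 + m := ⟨n - (s + 1), by omega⟩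
    rw [← Finset.sum_filter_add_sum_filter_not Finset.univ (fun i : Fin n => (i : ℕ) < s)]
    rw [← Finset.sum_filter_add_sum_filter_not
      (Finset.univ.filter (fun i : Fin n => ¬ (i : ℕ) < s)) (fun i : Fin n => (i : ℕ) = s)]
    have e1 : ∑ i ∈ Finset.univ.filter (fun i : Fin n => (i : ℕ) < s),
        (if (i : ℕ) < s then b i else if (i : ℕ) = s then t * s - B else t) = B := by
      rw [hB, hS0]
      exact Finset.sum_congr rfl (fun i hi => by
        simp only [Finset.mem_filter] at hi
        simp [hi.2])
    have e2 : (Finset.univ.filter (fun i : Fin n => ¬ (i : ℕ) < s)).filter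
        (fun i : Fin n => (i : ℕ) = s) = {(⟨s, hsn⟩ : Fin n)} := by
      ext j
      simp [Finset.mem_filter, Fin.ext_iff]
      omega
    have e3 : ∑ i ∈ (Finset.univ.filter (fun i : Fin n => ¬ (i : ℕ) < s)).filter
        (fun i : Fin n => (i : ℕ) = s),
        (if (i : ℕ) < s then b i else if (i : ℕ) = s then t * s - B else t) = t * s - B := by
      rw [e2, Finset.sum_singleton]
      simp
    have e4 : ∑ i ∈ (Finset.univ.filter (fun i : Fin n => ¬ (i : ℕ) < s)).filter
        (fun i : Fin n => ¬ (i : ℕ) = s),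
        (if (i : ℕ) < s then b i else if (i : ℕ) = s then t * s - B else t) = m * t := by
      rw [show ∑ i ∈ (Finset.univ.filter (fun i : Fin n => ¬ (i : ℕ) < s)).filter
          (fun i : Fin n => ¬ (i : ℕ) = s),
          (if (i : ℕ) < s then b i else if (i : ℕ) = s then t * s - B else t)
          = ∑ _i ∈ (Finset.univ.filter (fun i : Fin n => ¬ (i : ℕ) < s)).filter
          (fun i : Fin n => ¬ (i : ℕ) = s), t from
        Finset.sum_congr rfl (fun i hi => by
          simp only [Finset.mem_filter] at hi
          simp [hi.1.2, hi.2])]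
      rw [Finset.sum_const, smul_eq_mul]
      congr 1
      have e5 : (Finset.univ.filter (fun i : Fin n => ¬ (i : ℕ) < s)).filter
          (fun i : Fin n => ¬ (i : ℕ) = s)
          = Finset.attachFin (Finset.Ico (s + 1) n) (fun mm hmm => (Finset.mem_Ico.mp hmm).2) := by
        ext j
        simp [Finset.mem_attachFin, Finset.mem_Ico, j.isLt]
        omega
      rw [e5, Finset.card_attachFin, Nat.card_Ico]
      omega
    rw [e1, e3, e4]
    have h1 : B + (t * s - B) = t * s := by omega
    have h2 : t * (n - 1) = t * s + t * m := by
      rw [hm, show s + 1 + m - 1 = s + m from by omega, Nat.mul_add]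
    rw [h2, mul_comm m t, ← add_assoc, h1]
  have hbounds : ∀ i : Fin n,
      1 ≤ (if (i : ℕ) < s then b i else if (i : ℕ) = s then t * s - B else t) ∧
      (if (i : ℕ) < s then b i else if (i : ℕ) = s then t * s - B else t) ≤ t := by
    intro i
    by_cases h1 : (i : ℕ) < s
    · simp only [if_pos h1]
      exact ⟨h1b i h1, (hsmall i h1).le⟩
    · by_cases h2 : (i : ℕ) = s
      · simp only [if_neg h1, if_pos h2]
        omega
      · simp only [if_neg h1, if_neg h2]
        omega
  refine ⟨by omega, by omega, Or.inl ⟨hbounds, hsum⟩, ?_⟩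
  intro i
  by_cases h1 : (i : ℕ) < s
  · simp [h1]
  · by_cases h2 : (i : ℕ) = s
    · simp only [if_neg h1, if_pos h2]
      have := hbig i (by omega)
      omega
    · simp only [if_neg h1, if_neg h2]
      exact hbig i (by omega)
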